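/- arXiv:2311.18663 — 2 statements merged into one kernel-verified Lean document; each statement's English description precedes it below -/
import Mathlib

section
/- Let $A, B \subset \mathbb{R}^D$ be disjoint, nonempty, compact convex sets with $\mathrm{dist}(A,B) = \delta > 0$. Then $\mathrm{rch}(A \cup B) = \delta/2$. -/
open Metric

lemma convex_proj_unique {E : Type*} [NormedAddCommGroup E] [NormedSpace ℝ E]
    [StrictConvexSpace ℝ E] {s : Set E} (hs : Convex ℝ s) {x y z : E}
    (hy : y ∈ s) (hz : z ∈ s) (hdy : dist x y = infDist x s)
    (hdz : dist x z = infDist x s) : y = z := by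
  by_contra hne
  have hm : midpoint ℝ y z ∈ s := hs.segment_subset hy hz (midpoint_mem_segment y z)
  have hnorm : ‖x - y‖ = ‖x - z‖ := by
    rw [← dist_eq_norm, ← dist_eq_norm, hdy, hdz]
  have hne' : (x - y) ≠ (x - z) := fun h => hne (by
    have := sub_right_injective h; exact this)
  have hlt : ‖(x - y) + (x - z)‖ < ‖x - y‖ + ‖x - z‖ := by
    rcases lt_or_eq_of_le (norm_add_le (x - y) (x - z)) with h | h
    · exact h
    · exact absurd (eq_of_norm_eq_of_norm_add_eq hnorm h) hne'
  have hmid : x - midpoint ℝ y z = (2⁻¹ : ℝ) • ((x - y) + (x - z)) := by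
    rw [midpoint_eq_smul_add, invOf_eq_inv]; module
  have : dist x (midpoint ℝ y z) < infDist x s := by
    rw [dist_eq_norm, hmid, norm_smul]
    simp only [norm_inv, Real.norm_ofNat]
    calc (2:ℝ)⁻¹ * ‖(x - y) + (x - z)‖ < 2⁻¹ * (‖x - y‖ + ‖x - z‖) := by
          exact mul_lt_mul_of_pos_left hlt (by norm_num)
      _ = infDist x s := by
          rw [← dist_eq_norm, ← dist_eq_norm, hdy, hdz]; ring
  exact absurd (infDist_le_dist_of_mem hm) (not_le.mpr this)



/-- The reach of a set `C`: the supremum of the radii `r > 0` such that every point at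
distance at most `r` from `C` has a unique nearest point in `C`.  (`sSup ∅ = 0` by
convention in `ℝ`.) -/
noncomputable def reach {D : ℕ} (C : Set (EuclideanSpace ℝ (Fin D))) : ℝ :=
  sSup {r : ℝ | 0 < r ∧ ∀ x : EuclideanSpace ℝ (Fin D), Metric.infDist x C ≤ r →
    ∃! y, y ∈ C ∧ dist x y = Metric.infDist x C}

/-- If `A, B` are disjoint nonempty compact convex sets at distance `δ > 0`, then
`rch(A ∪ B) = δ/2`. -/
theorem reach_union_convex (D : ℕ) (A B : Set (EuclideanSpace ℝ (Fin D)))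
    (hA : IsCompact A) (hB : IsCompact B) (hAne : A.Nonempty) (hBne : B.Nonempty)
    (hAconv : Convex ℝ A) (hBconv : Convex ℝ B)
    (hdisj : Disjoint A B) (δ : ℝ) (hδpos : 0 < δ)
    (hδ : δ = sInf {r : ℝ | ∃ a ∈ A, ∃ b ∈ B, r = dist a b}) :
    reach (A ∪ B) = δ / 2 := by
  -- δ is a lower bound for distances between A and B
  have hlb : ∀ a ∈ A, ∀ b ∈ B, δ ≤ dist a b := by
    intro a ha b hb
    rw [hδ]
    exact csInf_le ⟨0, fun r ⟨a', _, b', _, hr⟩ => hr ▸ dist_nonneg⟩ ⟨a, ha, b, hb, rfl⟩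
  -- δ is attained
  obtain ⟨⟨a₀, b₀⟩, hab₀, hmin⟩ :=
    (hA.prod hB).exists_isMinOn (hAne.prod hBne)
      (continuous_fst.dist continuous_snd).continuousOn
  obtain ⟨ha₀, hb₀⟩ := hab₀
  have hd₀ : dist a₀ b₀ = δ := by
    refine le_antisymm ?_ (hlb a₀ ha₀ b₀ hb₀)
    rw [hδ]
    refine le_csInf ⟨dist a₀ b₀, a₀, ha₀, b₀, hb₀, rfl⟩ ?_
    rintro r ⟨a, ha, b, hb, rfl⟩
    exact isMinOn_iff.mp hmin (a, b) (Set.mk_mem_prod ha hb)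
  have hCne : (A ∪ B).Nonempty := hAne.mono Set.subset_union_left
  have hne₀ : a₀ ≠ b₀ := fun h => Set.disjoint_left.mp hdisj ha₀ (h ▸ hb₀)
  -- the reach set equals Ioo 0 (δ/2)
  have hset : {r : ℝ | 0 < r ∧ ∀ x : EuclideanSpace ℝ (Fin D),
      Metric.infDist x (A ∪ B) ≤ r →
      ∃! y, y ∈ A ∪ B ∧ dist x y = Metric.infDist x (A ∪ B)} = Set.Ioo 0 (δ / 2) := by
    ext r
    constructor
    · rintro ⟨hr, hun⟩
      refine ⟨hr, ?_⟩
      by_contra hge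
      push_neg at hge
      set m := midpoint ℝ a₀ b₀ with hm
      have hma : dist m a₀ = δ / 2 := by
        rw [hm, dist_midpoint_left, hd₀, Real.norm_ofNat]; ring
      have hmb : dist m b₀ = δ / 2 := by
        rw [hm, dist_midpoint_right, hd₀, Real.norm_ofNat]; ring
      have hinf : Metric.infDist m (A ∪ B) = δ / 2 := by
        refine le_antisymm (hma ▸ infDist_le_dist_of_mem (Or.inl ha₀)) ?_
        by_contra hlt
        push_neg at hlt
        obtain ⟨c, hc, hclt⟩ := (infDist_lt_iff hCne).mp hlt
        rcases hc with hc | hc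
        · have h1 : δ ≤ dist c b₀ := hlb c hc b₀ hb₀
          have h2 : dist c b₀ ≤ dist c m + dist m b₀ := dist_triangle _ _ _
          rw [hmb] at h2
          rw [dist_comm] at hclt
          linarith
        · have h1 : δ ≤ dist a₀ c := hlb a₀ ha₀ c hc
          have h2 : dist a₀ c ≤ dist a₀ m + dist m c := dist_triangle _ _ _
          rw [dist_comm a₀ m, hma] at h2
          linarith
      obtain ⟨y, _, huniq⟩ := hun m (hinf ▸ hge)
      have hya : a₀ = y := huniq a₀ ⟨Or.inl ha₀, by rw [hma, hinf]⟩
      have hyb : b₀ = y := huniq b₀ ⟨Or.inr hb₀, by rw [hmb, hinf]⟩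
      exact hne₀ (hya.trans hyb.symm)
    · rintro ⟨hr, hrδ⟩
      refine ⟨hr, fun x hx => ?_⟩
      obtain ⟨y, hy, hdy⟩ := (hA.union hB).exists_infDist_eq_dist hCne x
      have key : ∀ z, z ∈ A ∪ B ∧ dist x z = Metric.infDist x (A ∪ B) → z = y := by
        have same : ∀ u v : EuclideanSpace ℝ (Fin D), u ∈ A → v ∈ B →
            dist x u = Metric.infDist x (A ∪ B) →
            dist x v = Metric.infDist x (A ∪ B) → False := by
          intro u v hu hv hdu hdv
          have h1 : δ ≤ dist u v := hlb u hu v hv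
          have h2 : dist u v ≤ dist u x + dist x v := dist_triangle _ _ _
          rw [dist_comm u x, hdu, hdv] at h2
          linarith
        have conv : ∀ (s : Set (EuclideanSpace ℝ (Fin D))), Convex ℝ s →
            s.Nonempty → s ⊆ A ∪ B → ∀ u v, u ∈ s → v ∈ s →
            dist x u = Metric.infDist x (A ∪ B) →
            dist x v = Metric.infDist x (A ∪ B) → u = v := by
          intro s hconv hsne hsub u v hu hv hdu hdv
          have hle : Metric.infDist x (A ∪ B) ≤ Metric.infDist x s :=
            infDist_le_infDist_of_subset hsub hsne
          have hs_eq : Metric.infDist x s = Metric.infDist x (A ∪ B) :=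
            le_antisymm (hdu ▸ infDist_le_dist_of_mem hu) hle
          exact convex_proj_unique hconv hu hv (hdu.trans hs_eq.symm)
            (hdv.trans hs_eq.symm)
        rintro z ⟨hz, hdz⟩
        have hdy' : dist x y = Metric.infDist x (A ∪ B) := hdy.symm
        rcases hz with hzA | hzB <;> rcases hy with hyA | hyB
        · exact conv A hAconv hAne Set.subset_union_left z y hzA hyA hdz hdy'
        · exact absurd (same z y hzA hyB hdz hdy') (fun h => h)
        · exact absurd (same y z hyA hzB hdy' hdz) (fun h => h)
        · exact conv B hBconv hBne Set.subset_union_right z y hzB hyB hdz hdy'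
      exact ⟨y, ⟨hy, hdy.symm⟩, key⟩
  rw [reach, hset, csSup_Ioo (by linarith)]
end

section
/- Let $C \subset \mathbb{R}^D$ be compact with reach $\tau > 0$ and let $0 < \eta < \tau$. Then the reach of the offset satisfies $\mathrm{rch}(C^{\eta}) = \tau - \eta$, where $C^{\eta} = \{x : d_C(x) \le \eta\}$. -/
/-- The closed `r`-offset of a set: `Cʳ = {x : d_C(x) ≤ r}`. -/
def offset {D : ℕ} (C : Set (EuclideanSpace ℝ (Fin D))) (r : ℝ) :
    Set (EuclideanSpace ℝ (Fin D)) :=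
  {x | Metric.infDist x C ≤ r}

open Metric AffineMap

/-- Lower bound: the distance to the offset is at least `d_C(x) - η`. -/
lemma infDist_offset_ge {D : ℕ} {C : Set (EuclideanSpace ℝ (Fin D))} {η : ℝ}
    (hne : C.Nonempty) (hη : 0 ≤ η) (x : EuclideanSpace ℝ (Fin D)) :
    Metric.infDist x C - η ≤ Metric.infDist x (offset C η) := by
  by_contra h
  push_neg at h
  have hne' : (offset C η).Nonempty := by
    obtain ⟨c, hc⟩ := hne
    exact ⟨c, by simp [offset, Metric.infDist_zero_of_mem hc, hη]⟩
  rcases (Metric.infDist_lt_iff hne').1 h with ⟨w, hw, hwd⟩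
  have h1 : Metric.infDist x C ≤ Metric.infDist w C + dist x w :=
    Metric.infDist_le_infDist_add_dist
  have h2 : Metric.infDist w C ≤ η := hw
  linarith

/-- Upper bound / equality: if `η ≤ d_C(x)` then `d_{C^η}(x) = d_C(x) - η`. -/
lemma infDist_offset_eq {D : ℕ} {C : Set (EuclideanSpace ℝ (Fin D))}
    (hC : IsCompact C) (hne : C.Nonempty) {η : ℝ} (hη : 0 < η)
    {x : EuclideanSpace ℝ (Fin D)} (hx : η ≤ Metric.infDist x C) :
    Metric.infDist x (offset C η) = Metric.infDist x C - η := by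
  refine le_antisymm ?_ (infDist_offset_ge hne hη.le x)
  obtain ⟨z, hz, hzd⟩ := hC.exists_infDist_eq_dist hne x
  set d : ℝ := Metric.infDist x C with hd
  have hdpos : 0 < d := lt_of_lt_of_le hη hx
  set t : ℝ := (d - η) / d with ht
  have ht0 : 0 ≤ t := div_nonneg (by linarith) hdpos.le
  set y : EuclideanSpace ℝ (Fin D) := AffineMap.lineMap x z t with hy
  have hxz : dist x z = d := hzd.symm
  have hyx : dist y x = d - η := by
    rw [hy, dist_lineMap_left, hxz, Real.norm_eq_abs, abs_of_nonneg ht0, ht,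
      div_mul_cancel₀ _ hdpos.ne']
  have hyz : dist y z = η := by
    rw [hy, dist_lineMap_right, hxz, Real.norm_eq_abs]
    have : (1 : ℝ) - t = η / d := by rw [ht, one_sub_div hdpos.ne']; congr 1; ring
    rw [this, abs_of_nonneg (div_nonneg hη.le hdpos.le), div_mul_cancel₀ _ hdpos.ne']
  have hymem : y ∈ offset C η := by
    have := Metric.infDist_le_dist_of_mem (x := y) hz
    simpa [offset, hyz] using this
  calc Metric.infDist x (offset C η) ≤ dist x y := Metric.infDist_le_dist_of_mem hymem
    _ = d - η := by rw [dist_comm]; exact hyx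

/-- If `C` is compact with reach `τ > 0` and `0 < η < τ`, then `rch(C^η) = τ - η`. -/
theorem reach_offset (D : ℕ) (C : Set (EuclideanSpace ℝ (Fin D)))
    (hC : IsCompact C) (hne : C.Nonempty) (τ η : ℝ)
    (hτ : reach C = τ) (hτpos : 0 < τ) (hη : 0 < η) (hητ : η < τ) :
    reach (offset C η) = τ - η := by
  classical
  set Sc : Set ℝ := {r : ℝ | 0 < r ∧ ∀ x : EuclideanSpace ℝ (Fin D),
    Metric.infDist x C ≤ r → ∃! y, y ∈ C ∧ dist x y = Metric.infDist x C} with hSc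
  set So : Set ℝ := {r : ℝ | 0 < r ∧ ∀ x : EuclideanSpace ℝ (Fin D),
    Metric.infDist x (offset C η) ≤ r →
    ∃! y, y ∈ offset C η ∧ dist x y = Metric.infDist x (offset C η)} with hSo
  have hreachC : sSup Sc = τ := hτ
  have hScne : Sc.Nonempty := by
    by_contra h
    rw [Set.not_nonempty_iff_eq_empty] at h
    rw [h, Real.sSup_empty] at hreachC
    linarith
  have hScbdd : BddAbove Sc := by
    by_contra h
    rw [Real.sSup_of_not_bddAbove h] at hreachC
    linarith
  -- Step 1: transfer up: r ∈ So → r + η ∈ Sc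
  have step1 : ∀ r ∈ So, r + η ∈ Sc := by
    rintro r ⟨hrpos, hr⟩
    refine ⟨by linarith, fun x hx => ?_⟩
    obtain ⟨z, hz, hzd⟩ := hC.exists_infDist_eq_dist hne x
    by_cases hcase : Metric.infDist x C ≤ η
    · -- use an element of Sc bigger than η
      obtain ⟨s, hsSc, hs⟩ := exists_lt_of_lt_csSup hScne (by rw [hreachC]; exact hητ)
      exact hsSc.2 x (le_trans hcase hs.le)
    · push_neg at hcase
      set d : ℝ := Metric.infDist x C with hd
      have hdη : η < d := hcase
      have hdpos : 0 < d := lt_trans hη hdη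
      have hoff : Metric.infDist x (offset C η) = d - η := infDist_offset_eq hC hne hη hdη.le
      obtain ⟨y, _, hyuniq⟩ := hr x (by rw [hoff]; linarith)
      refine ⟨z, ⟨hz, hzd.symm⟩, ?_⟩
      rintro z' ⟨hz', hz'd⟩
      -- both z and z' are nearest points; map them into nearest points of the offset
      have key : ∀ w : EuclideanSpace ℝ (Fin D), w ∈ C → dist x w = d →
          AffineMap.lineMap x w ((d - η) / d) = y := by
        intro w hw hwd
        set t : ℝ := (d - η) / d with ht
        have ht0 : 0 ≤ t := div_nonneg (by linarith) hdpos.le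
        set yw := AffineMap.lineMap x w t with hyw
        have h1 : dist yw x = d - η := by
          rw [hyw, dist_lineMap_left, hwd, Real.norm_eq_abs, abs_of_nonneg ht0, ht,
            div_mul_cancel₀ _ hdpos.ne']
        have h2 : dist yw w = η := by
          rw [hyw, dist_lineMap_right, hwd, Real.norm_eq_abs]
          have : (1 : ℝ) - t = η / d := by rw [ht, one_sub_div hdpos.ne']; congr 1; ring
          rw [this, abs_of_nonneg (div_nonneg hη.le hdpos.le), div_mul_cancel₀ _ hdpos.ne']
        have hmem : yw ∈ offset C η := by
          have := Metric.infDist_le_dist_of_mem (x := yw) hw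
          simpa [offset, h2] using this
        exact hyuniq yw ⟨hmem, by rw [hoff, dist_comm]; exact h1⟩
      have hzz' : AffineMap.lineMap x z ((d - η) / d) = AffineMap.lineMap x z' ((d - η) / d) := by
        rw [key z hz hzd.symm, key z' hz' hz'd]
      have htne : ((d - η) / d : ℝ) ≠ 0 := by
        apply div_ne_zero <;> [linarith; exact hdpos.ne']
      have := hzz'
      simp only [AffineMap.lineMap_apply] at this
      have h3 : ((d - η) / d) • (z -ᵥ x) = ((d - η) / d) • (z' -ᵥ x) := by
        have := congrArg (fun p => p -ᵥ x) this
        simpa using this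
      have h4 : (z : EuclideanSpace ℝ (Fin D)) -ᵥ x = z' -ᵥ x := smul_right_injective _ htne h3
      have h5 := congrArg (fun v => v +ᵥ x) h4
      exact (by simpa using h5 : z = z').symm
  -- So is bounded above by τ - η
  have hSole : ∀ r ∈ So, r ≤ τ - η := by
    intro r hr
    have := le_csSup hScbdd (step1 r hr)
    rw [hreachC] at this
    linarith
  -- Step 2: transfer down: s ∈ Sc, η < s → s - η ∈ So
  have step2 : ∀ s ∈ Sc, η < s → s - η ∈ So := by
    rintro s ⟨hspos, hs⟩ hηs
    refine ⟨by linarith, fun x hx => ?_⟩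
    by_cases hcase : Metric.infDist x C ≤ η
    · -- x is in the offset; unique nearest point is x itself
      have hxmem : x ∈ offset C η := hcase
      have h0 : Metric.infDist x (offset C η) = 0 := Metric.infDist_zero_of_mem hxmem
      refine ⟨x, ⟨hxmem, by simp [h0]⟩, ?_⟩
      rintro w ⟨hw, hwd⟩
      rw [h0, dist_comm] at hwd
      exact dist_eq_zero.1 hwd
    · push_neg at hcase
      set dC : ℝ := Metric.infDist x C with hdC
      have hdη : η < dC := hcase
      have hdpos : 0 < dC := lt_trans hη hdη
      have hoff : Metric.infDist x (offset C η) = dC - η := infDist_offset_eq hC hne hη hdη.le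
      have hdCs : dC ≤ s := by rw [hoff] at hx; linarith
      obtain ⟨z, ⟨hz, hzd⟩, hzuniq⟩ := hs x hdCs
      have hxz : dist x z = dC := hzd
      set t : ℝ := (dC - η) / dC with ht
      have ht0 : 0 ≤ t := div_nonneg (by linarith) hdpos.le
      set y : EuclideanSpace ℝ (Fin D) := AffineMap.lineMap x z t with hy
      have hyx : dist x y = dC - η := by
        rw [dist_comm, hy, dist_lineMap_left, hxz, Real.norm_eq_abs, abs_of_nonneg ht0, ht,
          div_mul_cancel₀ _ hdpos.ne']
      have hyz : dist y z = η := by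
        rw [hy, dist_lineMap_right, hxz, Real.norm_eq_abs]
        have : (1 : ℝ) - t = η / dC := by rw [ht, one_sub_div hdpos.ne']; congr 1; ring
        rw [this, abs_of_nonneg (div_nonneg hη.le hdpos.le), div_mul_cancel₀ _ hdpos.ne']
      have hymem : y ∈ offset C η := by
        have := Metric.infDist_le_dist_of_mem (x := y) hz
        simpa [offset, hyz] using this
      refine ⟨y, ⟨hymem, by rw [hoff]; exact hyx⟩, ?_⟩
      rintro w ⟨hw, hwd⟩
      rw [hoff] at hwd
      -- w is a nearest point of x in the offset; show w = y
      obtain ⟨p, hp, hpd⟩ := hC.exists_infDist_eq_dist hne w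
      have hwp : dist w p ≤ η := by rw [← hpd]; exact hw
      have hxp_le : dist x p ≤ dC := by
        calc dist x p ≤ dist x w + dist w p := dist_triangle x w p
          _ ≤ (dC - η) + η := by linarith [hwd, hwp]
          _ = dC := by ring
      have hxp_ge : dC ≤ dist x p := Metric.infDist_le_dist_of_mem hp
      have hxp : dist x p = dC := le_antisymm hxp_le hxp_ge
      have hpz : p = z := hzuniq p ⟨hp, hxp⟩
      have hwz : dist w z = η := by
        have h1 : dist w z ≤ η := by rw [← hpz]; exact hwp
        have h2 : dC ≤ dist x w + dist w z := by
          calc dC = dist x z := hxz.symm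
            _ ≤ dist x w + dist w z := dist_triangle x w z
        linarith [hwd]
      have heq : dist x w + dist w z = dist x z := by rw [hwd, hwz, hxz]; ring
      have hbtw : Wbtw ℝ x w z := dist_add_dist_eq_iff.1 heq
      obtain ⟨u, hu, huw⟩ := hbtw
      have hu0 : 0 ≤ u := hu.1
      have hdistxw : dist x w = u * dC := by
        rw [← huw, dist_comm, dist_lineMap_left, hxz, Real.norm_eq_abs, abs_of_nonneg hu0]
      have hut : u = t := by
        have : u * dC = dC - η := by rw [← hdistxw, hwd]
        rw [ht, eq_div_iff hdpos.ne']
        linarith [this]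
      rw [← huw, hut]
  -- Now So is nonempty, bounded; compute sSup So
  show sSup So = τ - η
  have hub : sSup So ≤ τ - η := Real.sSup_le hSole (by linarith)
  have hSobdd : BddAbove So := ⟨τ - η, hSole⟩
  refine le_antisymm hub ?_
  by_contra hlt
  push_neg at hlt
  set c := sSup So with hc
  have hcτ : max η (c + η) < τ := by
    rw [max_lt_iff]
    constructor
    · exact hητ
    · linarith
  obtain ⟨s, hsSc, hs⟩ := exists_lt_of_lt_csSup hScne (by rw [hreachC]; exact hcτ)
  rw [max_lt_iff] at hs
  have hmem : s - η ∈ So := step2 s hsSc hs.1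
  have := le_csSup hSobdd hmem
  rw [← hc] at this
  linarith [hs.2]
end
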